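/- Let R be a nonsingular M-matrix with e'R ≥ 0' entrywise and p a nonnegative probability vector. Then the matrix (I − pe')R is an M-matrix; in particular, all its eigenvalues have nonnegative real part. -/

import Mathlib

open Matrix

/-- Extract an eigenvector from spectrum membership. -/
lemma aux_eigvec {K : ℕ} (A : Matrix (Fin K) (Fin K) ℂ) (μ : ℂ) (h : μ ∈ spectrum ℂ A) :
    ∃ v, v ≠ 0 ∧ A.mulVec v = μ • v := by
  rw [spectrum.mem_iff, Algebra.algebraMap_eq_smul_one,
    Matrix.isUnit_iff_isUnit_det, isUnit_iff_ne_zero, not_not] at h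
  obtain ⟨v, hv, hv2⟩ := (Matrix.exists_mulVec_eq_zero_iff).2 h
  refine ⟨v, hv, ?_⟩
  rw [Matrix.sub_mulVec, Matrix.smul_mulVec, Matrix.one_mulVec, sub_eq_zero] at hv2
  exact hv2.symm

/-- Eigenvalue bound by common column sum for nonnegative matrices. -/
lemma aux_colsum_bound {K : ℕ} (A : Matrix (Fin K) (Fin K) ℝ) (s : ℝ)
    (hA : ∀ i j, 0 ≤ A i j) (hcol : ∀ j, ∑ i, A i j = s) :
    ∀ μ ∈ spectrum ℂ (A.map Complex.ofReal), ‖μ‖ ≤ s := by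
  intro μ hμ
  obtain ⟨v, hv, hv2⟩ := aux_eigvec _ μ hμ
  have hvpos : 0 < ∑ i, ‖v i‖ := by
    rcases Function.ne_iff.1 hv with ⟨i, hi⟩
    exact Finset.sum_pos' (fun j _ => norm_nonneg _)
      ⟨i, Finset.mem_univ i, norm_pos_iff.2 hi⟩
  have key : ‖μ‖ * ∑ i, ‖v i‖ ≤ s * ∑ i, ‖v i‖ := by
    calc ‖μ‖ * ∑ i, ‖v i‖ = ∑ i, ‖μ * v i‖ := by
          rw [Finset.mul_sum]; simp [norm_mul]
      _ = ∑ i, ‖(A.map Complex.ofReal).mulVec v i‖ := by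
          simp only [hv2, Pi.smul_apply, smul_eq_mul]
      _ ≤ ∑ i, ∑ j, A i j * ‖v j‖ := by
          refine Finset.sum_le_sum fun i _ => ?_
          rw [Matrix.mulVec, dotProduct]
          refine (norm_sum_le _ _).trans (Finset.sum_le_sum fun j _ => ?_)
          simp only [Matrix.map_apply, norm_mul, Complex.norm_real,
            Real.norm_eq_abs, abs_of_nonneg (hA i j), le_refl]
      _ = ∑ j, (∑ i, A i j) * ‖v j‖ := by
          rw [Finset.sum_comm]; simp [Finset.sum_mul]
      _ = s * ∑ i, ‖v i‖ := by simp [hcol, Finset.mul_sum]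
  exact le_of_mul_le_mul_right key hvpos

theorem IpeR_is_Mmatrix {K : ℕ} (R N : Matrix (Fin K) (Fin K) ℝ) (s : ℝ)
    (hs : 0 < s) (hN : ∀ i j, 0 ≤ N i j)
    (hR : R = s • (1 : Matrix (Fin K) (Fin K) ℝ) - N)
    (hρ : ∀ μ ∈ spectrum ℂ (N.map (Complex.ofReal)), ‖μ‖ < s)
    (heR : ∀ j, 0 ≤ ∑ i, R i j)
    (p : Fin K → ℝ) (hp : ∀ i, 0 ≤ p i) (hp1 : ∑ i, p i = 1) :
    (∃ s' : ℝ, 0 < s' ∧ ∃ N' : Matrix (Fin K) (Fin K) ℝ,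
        (∀ i j, 0 ≤ N' i j) ∧
        (∀ μ ∈ spectrum ℂ (N'.map (Complex.ofReal)), ‖μ‖ ≤ s') ∧
        (1 - Matrix.vecMulVec p (fun _ => (1:ℝ))) * R
          = s' • (1 : Matrix (Fin K) (Fin K) ℝ) - N') ∧
    ∀ μ ∈ spectrum ℂ
        (((1 - Matrix.vecMulVec p (fun _ => (1:ℝ))) * R).map (Complex.ofReal)),
      0 ≤ μ.re := by
  set c : Fin K → ℝ := fun j => ∑ i, R i j with hc
  set N' : Matrix (Fin K) (Fin K) ℝ := Matrix.of fun i j => N i j + p i * c j with hN'def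
  have hN' : ∀ i j, 0 ≤ N' i j := fun i j =>
    add_nonneg (hN i j) (mul_nonneg (hp i) (heR j))
  -- the structural identity
  have hM : (1 - Matrix.vecMulVec p (fun _ => (1:ℝ))) * R
      = s • (1 : Matrix (Fin K) (Fin K) ℝ) - N' := by
    ext i j
    rw [Matrix.sub_mul, Matrix.one_mul]
    simp only [Matrix.sub_apply, Matrix.mul_apply, Matrix.vecMulVec_apply, mul_one,
      Matrix.smul_apply, smul_eq_mul, hN'def, Matrix.of_apply]
    have hcj : ∑ x, R x j = c j := rfl
    rw [← Finset.mul_sum, hcj, hR]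
    simp only [Matrix.sub_apply, Matrix.smul_apply, smul_eq_mul]
    ring
  -- column sums of N' are all s
  have hcolN : ∀ j, c j = s - ∑ i, N i j := by
    intro j
    have := congrArg (fun M => ∑ i, M i j) hR
    simp only [Matrix.sub_apply, Matrix.smul_apply, Matrix.one_apply, smul_eq_mul,
      Finset.sum_sub_distrib] at this
    have h1 : ∑ i, s * (if i = j then (1:ℝ) else 0) = s := by
      simp [Finset.sum_ite_eq', mul_ite]
    rw [h1] at this
    rw [hc]
    linarith [this]
  have hcol : ∀ j, ∑ i, N' i j = s := by
    intro j
    simp only [hN'def, Matrix.of_apply, Finset.sum_add_distrib, ← Finset.sum_mul, hp1]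
    rw [hcolN j]
    ring
  have key := aux_colsum_bound N' s hN' hcol
  refine ⟨⟨s, hs, N', hN', key, hM⟩, ?_⟩
  intro μ hμ
  rw [hM] at hμ
  -- translate spectrum membership
  have hmap : ((s • (1 : Matrix (Fin K) (Fin K) ℝ) - N').map Complex.ofReal)
      = (s : ℂ) • (1 : Matrix (Fin K) (Fin K) ℂ) - N'.map Complex.ofReal := by
    ext i j
    simp [Matrix.map_apply, Matrix.sub_apply, Matrix.smul_apply, Matrix.one_apply,
      apply_ite Complex.ofReal]
  rw [hmap] at hμ
  have hsm : (s : ℂ) - μ ∈ spectrum ℂ (N'.map Complex.ofReal) := by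
    rw [spectrum.mem_iff, Algebra.algebraMap_eq_smul_one] at hμ ⊢
    intro hcon
    apply hμ
    have : μ • (1 : Matrix (Fin K) (Fin K) ℂ)
        - ((s : ℂ) • 1 - N'.map Complex.ofReal)
        = -(((s : ℂ) - μ) • 1 - N'.map Complex.ofReal) := by
      rw [sub_smul]; abel
    rw [this]
    exact hcon.neg
  have hb := key _ hsm
  have : s - μ.re ≤ ‖(s : ℂ) - μ‖ := by
    have := Complex.abs_re_le_norm ((s : ℂ) - μ)
    simp only [Complex.sub_re, Complex.ofReal_re] at this
    calc s - μ.re ≤ |s - μ.re| := le_abs_self _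
      _ ≤ ‖(s:ℂ) - μ‖ := by simpa using this
  linarith
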